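/- Boundary length of unions of bad squares (Lemma 'cup'). There are universal constants c > 0 and θ₀ > 0 with the following property. Let θ = 2^{−n} ≤ θ₀ for some n ∈ ℕ, μ > 0, and let J* ⊆ ℝ² be a Borel set with H¹(J*) < ∞. Then for all integers 8 ≤ i₁ ≤ i₂ < ∞ and all subfamilies ℛ^j ⊆ 𝒬^j_bad (i₁ ≤ j ≤ i₂), the set R := ⋃_{j=i₁}^{i₂} ⋃_{Q∈ℛ^j} closure(Q''') satisfies H¹(∂R) ≤ c·θ^{−3}·H¹(J* ∩ R). Moreover, there is a set Γ_R ⊇ ∂R which is a finite union of closed line segments, with H¹(Γ_R) ≤ c·θ^{−3}·H¹(J* ∩ R), such that for each connected component R_k of R the set Γ_R ∩ R_k is connected. -/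

import Mathlib

open MeasureTheory Set
open scoped ENNReal NNReal

noncomputable section

/-- The Euclidean plane. -/
abbrev E2 := EuclideanSpace ℝ (Fin 2)

/-- The open square `Q_μ = (-μ, μ)²`. -/
def Qsq (μ : ℝ) : Set E2 := {x | ∀ i : Fin 2, |x i| < μ}

/-- `Γ` is a finite union of closed line segments. -/
def FinSegUnion (Γ : Set E2) : Prop :=
  ∃ (n : ℕ) (a b : Fin n → E2), Γ = ⋃ i : Fin n, segment ℝ (a i) (b i)

/-- A dyadic square of the grid `𝒬^i` (for given parameters `θ, μ`):
it is encoded by its scale index `i` and its integer position `k`. -/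
structure DSq where
  idx : ℕ
  pos : Fin 2 → ℤ

namespace DSq

/-- The half-sidelength `s_i = μ θ^i` of a square of `𝒬^i`. -/
def sc (θ μ : ℝ) (Q : DSq) : ℝ := μ * θ ^ Q.idx

/-- The center `p ∈ s(1,1) + 2sℤ²` of the square. -/
def ctr (θ μ : ℝ) (Q : DSq) (j : Fin 2) : ℝ := Q.sc θ μ + 2 * Q.sc θ μ * (Q.pos j : ℝ)

/-- The open square `Q = p + s(-1,1)²` itself. -/
def core (θ μ : ℝ) (Q : DSq) : Set E2 :=
  {x | ∀ j : Fin 2, |x j - Q.ctr θ μ j| < Q.sc θ μ}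

/-- The concentric enlarged square with `lam` times the sidelength
(`lam = 3/2` gives `Q'`, `lam = 3` gives `Q''`, `lam = 5` gives `Q'''`). -/
def enl (θ μ lam : ℝ) (Q : DSq) : Set E2 :=
  {x | ∀ j : Fin 2, |x j - Q.ctr θ μ j| < lam * Q.sc θ μ}

end DSq

/-- The set of bad squares at scale `i` relative to a set `S`:
those with `H¹(S ∩ Q') ≥ θ³ s_i`. -/
def badSq (θ μ : ℝ) (S : Set E2) (i : ℕ) : Set DSq :=
  {Q | Q.idx = i ∧ ENNReal.ofReal (θ ^ 3 * (μ * θ ^ i)) ≤ μH[1] (S ∩ Q.enl θ μ (3 / 2))}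

namespace BSQ

/-- closed axis-parallel box -/
def box (c : Fin 2 → ℝ) (r : ℝ) : Set E2 := {x | ∀ j, |x j - c j| ≤ r}

/-- open axis-parallel box -/
def obox (c : Fin 2 → ℝ) (r : ℝ) : Set E2 := {x | ∀ j, |x j - c j| < r}

variable {c : Fin 2 → ℝ} {r : ℝ}

lemma obox_subset_box : obox c r ⊆ box c r := fun x hx j => (hx j).le

lemma eqv_apply (x : E2) (j : Fin 2) : (EuclideanSpace.equiv (Fin 2) ℝ) x j = x j := rfl

lemma box_eq_pi : box c r =
    ⇑(EuclideanSpace.equiv (Fin 2) ℝ) ⁻¹' (univ.pi fun j => Icc (c j - r) (c j + r)) := by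
  ext x
  simp only [box, mem_setOf_eq, mem_preimage, mem_pi, mem_univ, forall_true_left, mem_Icc,
    eqv_apply]
  refine forall_congr' fun j => ?_
  rw [abs_sub_le_iff]
  constructor
  · rintro ⟨h1, h2⟩; constructor <;> linarith
  · rintro ⟨h1, h2⟩; constructor <;> linarith

lemma obox_eq_pi : obox c r =
    ⇑(EuclideanSpace.equiv (Fin 2) ℝ) ⁻¹' (univ.pi fun j => Ioo (c j - r) (c j + r)) := by
  ext x
  simp only [obox, mem_setOf_eq, mem_preimage, mem_pi, mem_univ, forall_true_left, mem_Ioo,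
    eqv_apply]
  refine forall_congr' fun j => ?_
  rw [abs_sub_lt_iff]
  constructor
  · rintro ⟨h1, h2⟩; constructor <;> linarith
  · rintro ⟨h1, h2⟩; constructor <;> linarith

lemma isClosed_box : IsClosed (box c r) := by
  rw [box_eq_pi]
  exact (isClosed_set_pi fun j _ => isClosed_Icc).preimage
    (EuclideanSpace.equiv (Fin 2) ℝ).continuous

lemma isOpen_obox : IsOpen (obox c r) := by
  rw [obox_eq_pi]
  exact (isOpen_set_pi finite_univ fun j _ => isOpen_Ioo).preimage
    (EuclideanSpace.equiv (Fin 2) ℝ).continuous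

lemma preimage_closure' (s : Set (Fin 2 → ℝ)) :
    closure (⇑(EuclideanSpace.equiv (Fin 2) ℝ) ⁻¹' s) =
      ⇑(EuclideanSpace.equiv (Fin 2) ℝ) ⁻¹' closure s :=
  ((EuclideanSpace.equiv (Fin 2) ℝ).toHomeomorph.preimage_closure s).symm

lemma preimage_interior' (s : Set (Fin 2 → ℝ)) :
    interior (⇑(EuclideanSpace.equiv (Fin 2) ℝ) ⁻¹' s) =
      ⇑(EuclideanSpace.equiv (Fin 2) ℝ) ⁻¹' interior s :=
  ((EuclideanSpace.equiv (Fin 2) ℝ).toHomeomorph.preimage_interior s).symm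

lemma closure_obox (hr : 0 < r) : closure (obox c r) = box c r := by
  rw [obox_eq_pi, box_eq_pi, preimage_closure', closure_pi_set]
  exact congrArg _ (Set.pi_congr rfl fun j _ => closure_Ioo (by linarith))

lemma interior_box : interior (box c r) = obox c r := by
  rw [obox_eq_pi, box_eq_pi, preimage_interior', interior_pi_set finite_univ]
  exact congrArg _ (Set.pi_congr rfl fun j _ => interior_Icc)

lemma frontier_box : frontier (box c r) = box c r \ obox c r := by
  rw [frontier, isClosed_box.closure_eq, interior_box]

lemma convex_box : Convex ℝ (box c r) := by
  intro x hx y hy a b ha hb hab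
  intro j
  have hx' := hx j; have hy' := hy j
  have h : (a • x + b • y) j - c j = a * (x j - c j) + b * (y j - c j) := by
    simp only [PiLp.add_apply, PiLp.smul_apply, smul_eq_mul]
    linear_combination (c j) * hab
  rw [h]
  calc |a * (x j - c j) + b * (y j - c j)| ≤ |a * (x j - c j)| + |b * (y j - c j)| := abs_add_le _ _
    _ = a * |x j - c j| + b * |y j - c j| := by
        rw [abs_mul, abs_mul, abs_of_nonneg ha, abs_of_nonneg hb]
    _ ≤ a * r + b * r := by gcongr
    _ = r := by rw [← add_mul, hab, one_mul]

-- POINTS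
def pt (a b : ℝ) : E2 := (WithLp.equiv 2 (Fin 2 → ℝ)).symm ![a, b]

@[simp] lemma pt_zero (a b : ℝ) : pt a b 0 = a := rfl
@[simp] lemma pt_one (a b : ℝ) : pt a b 1 = b := rfl

lemma mem_box_iff {x : E2} : x ∈ box c r ↔ |x 0 - c 0| ≤ r ∧ |x 1 - c 1| ≤ r := by
  constructor
  · intro h; exact ⟨h 0, h 1⟩
  · rintro ⟨h0, h1⟩ j; fin_cases j <;> assumption

lemma mem_obox_iff {x : E2} : x ∈ obox c r ↔ |x 0 - c 0| < r ∧ |x 1 - c 1| < r := by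
  constructor
  · intro h; exact ⟨h 0, h 1⟩
  · rintro ⟨h0, h1⟩ j; fin_cases j <;> assumption

lemma mem_segment_horiz {a0 a1 b : ℝ} (h : a0 < a1) {x : E2} :
    x ∈ segment ℝ (pt a0 b) (pt a1 b) ↔ (a0 ≤ x 0 ∧ x 0 ≤ a1) ∧ x 1 = b := by
  rw [segment_eq_image]
  constructor
  · rintro ⟨t, ⟨ht0, ht1⟩, rfl⟩
    simp only [PiLp.add_apply, PiLp.smul_apply, pt_zero, pt_one, smul_eq_mul]
    refine ⟨⟨by nlinarith, by nlinarith⟩, by ring⟩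
  · rintro ⟨⟨h0, h1⟩, hb⟩
    have hne : a1 - a0 ≠ 0 := by linarith
    refine ⟨(x 0 - a0) / (a1 - a0), ⟨div_nonneg (by linarith) (by linarith), ?_⟩, ?_⟩
    · rw [div_le_one (by linarith)]; linarith
    · refine PiLp.ext (Fin.forall_fin_two.2 ⟨?_, ?_⟩)
      · simp only [PiLp.add_apply, PiLp.smul_apply, pt_zero, pt_one, smul_eq_mul]
        field_simp
        ring
      · simp only [PiLp.add_apply, PiLp.smul_apply, pt_zero, pt_one, smul_eq_mul]
        rw [hb]; ring

lemma mem_segment_vert {a b0 b1 : ℝ} (h : b0 < b1) {x : E2} :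
    x ∈ segment ℝ (pt a b0) (pt a b1) ↔ x 0 = a ∧ (b0 ≤ x 1 ∧ x 1 ≤ b1) := by
  rw [segment_eq_image]
  constructor
  · rintro ⟨t, ⟨ht0, ht1⟩, rfl⟩
    simp only [PiLp.add_apply, PiLp.smul_apply, pt_zero, pt_one, smul_eq_mul]
    refine ⟨by ring, ⟨by nlinarith, by nlinarith⟩⟩
  · rintro ⟨ha, ⟨h0, h1⟩⟩
    have hne : b1 - b0 ≠ 0 := by linarith
    refine ⟨(x 1 - b0) / (b1 - b0), ⟨div_nonneg (by linarith) (by linarith), ?_⟩, ?_⟩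
    · rw [div_le_one (by linarith)]; linarith
    · refine PiLp.ext (Fin.forall_fin_two.2 ⟨?_, ?_⟩)
      · simp only [PiLp.add_apply, PiLp.smul_apply, pt_zero, pt_one, smul_eq_mul]
        rw [ha]; ring
      · simp only [PiLp.add_apply, PiLp.smul_apply, pt_zero, pt_one, smul_eq_mul]
        field_simp
        ring

-- BOUNDARY as union of four segments
def bdry (c : Fin 2 → ℝ) (r : ℝ) : Set E2 :=
  ((segment ℝ (pt (c 0 - r) (c 1 - r)) (pt (c 0 - r) (c 1 + r)) ∪
    segment ℝ (pt (c 0 - r) (c 1 - r)) (pt (c 0 + r) (c 1 - r))) ∪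
    segment ℝ (pt (c 0 - r) (c 1 + r)) (pt (c 0 + r) (c 1 + r))) ∪
    segment ℝ (pt (c 0 + r) (c 1 - r)) (pt (c 0 + r) (c 1 + r))

lemma bdry_eq (hr : 0 < r) : bdry c r = box c r \ obox c r := by
  have hlt0 : c 0 - r < c 0 + r := by linarith
  have hlt1 : c 1 - r < c 1 + r := by linarith
  ext x
  constructor
  · intro hx
    rcases hx with ((hL | hB) | hT) | hR
    · rw [mem_segment_vert hlt1] at hL
      obtain ⟨h0, hI⟩ := hL
      refine ⟨mem_box_iff.2 ⟨by rw [h0]; rw [abs_of_nonpos] <;> linarith,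
        abs_le.2 ⟨by linarith, by linarith⟩⟩, fun hob => ?_⟩
      have := (mem_obox_iff.1 hob).1
      rw [h0] at this
      rw [abs_of_nonpos (by linarith)] at this; linarith
    · rw [mem_segment_horiz hlt0] at hB
      obtain ⟨hI, h1⟩ := hB
      refine ⟨mem_box_iff.2 ⟨abs_le.2 ⟨by linarith, by linarith⟩,
        by rw [h1]; rw [abs_of_nonpos] <;> linarith⟩, fun hob => ?_⟩
      have := (mem_obox_iff.1 hob).2
      rw [h1] at this
      rw [abs_of_nonpos (by linarith)] at this; linarith
    · rw [mem_segment_horiz hlt0] at hT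
      obtain ⟨hI, h1⟩ := hT
      refine ⟨mem_box_iff.2 ⟨abs_le.2 ⟨by linarith, by linarith⟩,
        by rw [h1]; rw [abs_of_nonneg] <;> linarith⟩, fun hob => ?_⟩
      have := (mem_obox_iff.1 hob).2
      rw [h1] at this
      rw [abs_of_nonneg (by linarith)] at this; linarith
    · rw [mem_segment_vert hlt1] at hR
      obtain ⟨h0, hI⟩ := hR
      refine ⟨mem_box_iff.2 ⟨by rw [h0]; rw [abs_of_nonneg] <;> linarith,
        abs_le.2 ⟨by linarith, by linarith⟩⟩, fun hob => ?_⟩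
      have := (mem_obox_iff.1 hob).1
      rw [h0] at this
      rw [abs_of_nonneg (by linarith)] at this; linarith
  · rintro ⟨hb, ho⟩
    rw [mem_box_iff] at hb
    obtain ⟨hb0, hb1⟩ := hb
    rw [mem_obox_iff, not_and_or, not_lt, not_lt] at ho
    rw [abs_le] at hb0 hb1
    rcases ho with h | h
    · have habs : |x 0 - c 0| = r := le_antisymm (abs_le.2 hb0) h
      rcases (abs_eq hr.le).1 habs with h0 | h0
      · exact Or.inr ((mem_segment_vert hlt1).2 ⟨by linarith, by constructor <;> linarith⟩)
      · exact Or.inl (Or.inl (Or.inl ((mem_segment_vert hlt1).2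
          ⟨by linarith, by constructor <;> linarith⟩)))
    · have habs : |x 1 - c 1| = r := le_antisymm (abs_le.2 hb1) h
      rcases (abs_eq hr.le).1 habs with h1 | h1
      · exact Or.inl (Or.inr ((mem_segment_horiz hlt0).2
          ⟨⟨by linarith, by linarith⟩, by linarith⟩))
      · exact Or.inl (Or.inl (Or.inr ((mem_segment_horiz hlt0).2
          ⟨⟨by linarith, by linarith⟩, by linarith⟩)))


lemma isConnected_segment' (a b : E2) : IsConnected (segment ℝ a b) :=
  ⟨⟨a, left_mem_segment ℝ a b⟩, (convex_segment a b).isPreconnected⟩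

lemma isConnected_bdry (hr : 0 < r) : IsConnected (bdry c r) := by
  have hlt0 : c 0 - r < c 0 + r := by linarith
  have hlt1 : c 1 - r < c 1 + r := by linarith
  refine IsConnected.union ⟨pt (c 0 + r) (c 1 - r), ?_, ?_⟩
    (IsConnected.union ⟨pt (c 0 - r) (c 1 + r), ?_, ?_⟩
      (IsConnected.union ⟨pt (c 0 - r) (c 1 - r), ?_, ?_⟩
        (isConnected_segment' _ _) (isConnected_segment' _ _))
      (isConnected_segment' _ _))
    (isConnected_segment' _ _)
  · exact Or.inl (Or.inr (right_mem_segment ℝ _ _))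
  · exact left_mem_segment ℝ _ _
  · exact Or.inl (right_mem_segment ℝ _ _)
  · exact left_mem_segment ℝ _ _
  · exact left_mem_segment ℝ _ _
  · exact left_mem_segment ℝ _ _

lemma mh_seg_h (a0 a1 b : ℝ) :
    μH[1] (segment ℝ (pt a0 b) (pt a1 b)) = ENNReal.ofReal |a1 - a0| := by
  rw [MeasureTheory.hausdorffMeasure_segment, edist_dist, EuclideanSpace.dist_eq]
  congr 1
  rw [Fin.sum_univ_two]
  simp only [pt_zero, pt_one, Real.dist_eq, sub_self, abs_zero]
  rw [abs_sub_comm]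
  rw [show |a1 - a0| ^ 2 + 0 ^ 2 = |a1 - a0| ^ 2 by ring]
  rw [Real.sqrt_sq_eq_abs, abs_abs]

lemma mh_seg_v (a b0 b1 : ℝ) :
    μH[1] (segment ℝ (pt a b0) (pt a b1)) = ENNReal.ofReal |b1 - b0| := by
  rw [MeasureTheory.hausdorffMeasure_segment, edist_dist, EuclideanSpace.dist_eq]
  congr 1
  rw [Fin.sum_univ_two]
  simp only [pt_zero, pt_one, Real.dist_eq, sub_self, abs_zero]
  rw [abs_sub_comm]
  rw [show 0 ^ 2 + |b1 - b0| ^ 2 = |b1 - b0| ^ 2 by ring]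
  rw [Real.sqrt_sq_eq_abs, abs_abs]

lemma measure_bdry_le (hr : 0 < r) : μH[1] (bdry c r) ≤ ENNReal.ofReal (8 * r) := by
  have e2 : |(c 1 + r) - (c 1 - r)| = 2 * r := by rw [abs_of_nonneg] <;> linarith
  have e0 : |(c 0 + r) - (c 0 - r)| = 2 * r := by rw [abs_of_nonneg] <;> linarith
  have key : μH[1] (bdry c r) ≤
      ENNReal.ofReal (2*r) + ENNReal.ofReal (2*r) + ENNReal.ofReal (2*r)
        + ENNReal.ofReal (2*r) := by
    refine le_trans (measure_union_le _ _) ?_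
    gcongr
    · refine le_trans (measure_union_le _ _) ?_
      gcongr
      · refine le_trans (measure_union_le _ _) ?_
        gcongr
        · rw [mh_seg_v, e2]
        · rw [mh_seg_h, e0]
      · rw [mh_seg_h, e0]
    · rw [mh_seg_v, e2]
  refine key.trans (le_of_eq ?_)
  rw [← ENNReal.ofReal_add (by linarith) (by linarith),
    ← ENNReal.ofReal_add (by linarith) (by linarith),
    ← ENNReal.ofReal_add (by linarith) (by linarith)]
  congr 1; ring

lemma center_mem_box (hr : 0 ≤ r) : pt (c 0) (c 1) ∈ box c r := by
  refine mem_box_iff.2 ⟨?_, ?_⟩ <;> simp [hr]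

lemma bdry_nonempty : (bdry c r).Nonempty :=
  ⟨pt (c 0 - r) (c 1 - r), Or.inl (Or.inl (Or.inl (left_mem_segment ℝ _ _)))⟩

lemma bdry_subset_box (hr : 0 < r) : bdry c r ⊆ box c r := by
  rw [bdry_eq hr]; exact diff_subset

lemma box_subset_convex (hr : 0 < r) {B : Set E2} (hB : Convex ℝ B) (h : bdry c r ⊆ B) :
    box c r ⊆ B := by
  intro x hx
  rw [mem_box_iff] at hx
  obtain ⟨h0, h1⟩ := hx
  rw [abs_le] at h0 h1
  have hlt1 : c 1 - r < c 1 + r := by linarith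
  have hu : pt (c 0 - r) (x 1) ∈ bdry c r :=
    Or.inl (Or.inl (Or.inl ((mem_segment_vert hlt1).2
      ⟨rfl, by simp only [pt_one]; constructor <;> linarith⟩)))
  have hv : pt (c 0 + r) (x 1) ∈ bdry c r :=
    Or.inr ((mem_segment_vert hlt1).2
      ⟨rfl, by simp only [pt_one]; constructor <;> linarith⟩)
  have hx' : x ∈ segment ℝ (pt (c 0 - r) (x 1)) (pt (c 0 + r) (x 1)) := by
    rw [mem_segment_horiz (by linarith)]
    exact ⟨⟨by linarith, by linarith⟩, rfl⟩
  exact hB.segment_subset (h hu) (h hv) hx'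

lemma cross_frontier {α : Type*} [TopologicalSpace α] {s t : Set α} (hs : IsPreconnected s)
    (h1 : (s ∩ t).Nonempty) (h2 : (s \ t).Nonempty) : (s ∩ frontier t).Nonempty := by
  by_contra hemp
  rw [not_nonempty_iff_eq_empty] at hemp
  have hno : ∀ y ∈ s, y ∉ frontier t := fun y hy hf =>
    eq_empty_iff_forall_notMem.1 hemp y ⟨hy, hf⟩
  have hsub : s ⊆ interior t ∪ (closure t)ᶜ := by
    intro y hy
    by_cases hyc : y ∈ closure t
    · by_cases hyi : y ∈ interior t
      · exact Or.inl hyi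
      · exact absurd ⟨hyc, hyi⟩ (hno y hy)
    · exact Or.inr hyc
  obtain ⟨z, hzs, hzt⟩ := h1
  obtain ⟨w, hws, hwt⟩ := h2
  have hz' : z ∈ interior t := by
    rcases hsub hzs with h | h
    · exact h
    · exact absurd (subset_closure hzt) h
  have hw' : w ∈ (closure t)ᶜ := by
    rcases hsub hws with h | h
    · exact absurd (interior_subset h) hwt
    · exact h
  obtain ⟨v, hv⟩ := hs (interior t) (closure t)ᶜ isOpen_interior (isClosed_closure).isOpen_compl
    hsub ⟨z, hzs, hz'⟩ ⟨w, hws, hw'⟩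
  exact hv.2.2 (subset_closure (interior_subset hv.2.1))

lemma bdry_inter_bdry {c1 c2 : Fin 2 → ℝ} {r1 r2 : ℝ} (h1 : 0 < r1) (h2 : 0 < r2)
    (hint : (box c1 r1 ∩ box c2 r2).Nonempty)
    (hAB : ¬ box c1 r1 ⊆ box c2 r2) (hBA : ∃ x ∈ box c2 r2, x ∉ box c1 r1) :
    (bdry c1 r1 ∩ bdry c2 r2).Nonempty := by
  by_contra hemp
  rw [not_nonempty_iff_eq_empty] at hemp
  obtain ⟨y, hy1, hy2⟩ := hint
  obtain ⟨x, hx2, hx1⟩ := hBA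
  -- the segment from y to x lies in box c2 r2 and crosses frontier of box c1 r1
  have hseg : segment ℝ y x ⊆ box c2 r2 := convex_box.segment_subset hy2 hx2
  have hz : (segment ℝ y x ∩ frontier (box c1 r1)).Nonempty := by
    refine cross_frontier (convex_segment y x).isPreconnected
      ⟨y, left_mem_segment ℝ y x, hy1⟩ ⟨x, right_mem_segment ℝ y x, hx1⟩
  obtain ⟨z, hzseg, hzf⟩ := hz
  rw [frontier_box, ← bdry_eq h1] at hzf
  have hzbox2 : z ∈ box c2 r2 := hseg hzseg
  have hznot : z ∉ bdry c2 r2 := fun hzb =>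
    eq_empty_iff_forall_notMem.1 hemp z ⟨hzf, hzb⟩
  have hzobox : z ∈ obox c2 r2 := by
    by_contra hno
    exact hznot (by rw [bdry_eq h2]; exact ⟨hzbox2, hno⟩)
  -- a point of bdry c1 r1 outside box c2 r2
  have hw : ∃ w ∈ bdry c1 r1, w ∉ box c2 r2 := by
    by_contra hall
    push_neg at hall
    exact hAB (box_subset_convex h1 convex_box hall)
  obtain ⟨w, hwb, hwout⟩ := hw
  -- split the connected set bdry c1 r1
  have hconn := (isConnected_bdry (c := c1) h1).isPreconnected
  have hcover : bdry c1 r1 ⊆ obox c2 r2 ∪ (box c2 r2)ᶜ := by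
    intro u hu
    by_cases hub : u ∈ box c2 r2
    · left
      by_contra huo
      exact eq_empty_iff_forall_notMem.1 hemp u
        ⟨hu, by rw [bdry_eq h2]; exact ⟨hub, huo⟩⟩
    · exact Or.inr hub
  obtain ⟨v, hv⟩ := hconn (obox c2 r2) (box c2 r2)ᶜ isOpen_obox isClosed_box.isOpen_compl
    hcover ⟨z, hzf, hzobox⟩ ⟨w, hwb, hwout⟩
  exact hv.2.2 (obox_subset_box hv.2.1)

-- bounded-multiplicity sum bound
lemma sum_measure_le_card_mul {ι : Type*} {α : Type*} [MeasurableSpace α]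
    (μ : Measure α) (F : Finset ι) (A : ι → Set α) [∀ (y : α) i, Decidable (y ∈ A i)]
    (hA : ∀ i ∈ F, MeasurableSet (A i)) (N : ℕ)
    (hN : ∀ y, ((F.filter (fun i => y ∈ A i)).card : ℕ) ≤ N) :
    ∑ i ∈ F, μ (A i) ≤ (N : ℝ≥0∞) * μ (⋃ i ∈ F, A i) := by
  have hUm : MeasurableSet (⋃ i ∈ F, A i) := F.measurableSet_biUnion hA
  have h1 : ∑ i ∈ F, μ (A i) = ∫⁻ y, ∑ i ∈ F, (A i).indicator (1 : α → ℝ≥0∞) y ∂μ := by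
    rw [MeasureTheory.lintegral_finset_sum _ (fun i hi => measurable_one.indicator (hA i hi))]
    exact Finset.sum_congr rfl fun i hi =>
      (MeasureTheory.lintegral_indicator_one (hA i hi)).symm
  rw [h1]
  have h2 : (N : ℝ≥0∞) * μ (⋃ i ∈ F, A i) =
      ∫⁻ y, (⋃ i ∈ F, A i).indicator (fun _ => (N : ℝ≥0∞)) y ∂μ := by
    rw [MeasureTheory.lintegral_indicator_const hUm]
  rw [h2]
  refine MeasureTheory.lintegral_mono fun y => ?_
  by_cases hy : y ∈ ⋃ i ∈ F, A i
  · rw [Set.indicator_of_mem hy]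
    have : ∑ i ∈ F, (A i).indicator (1 : α → ℝ≥0∞) y
        = ((F.filter (fun i => y ∈ A i)).card : ℝ≥0∞) := by
      rw [← Finset.sum_boole]
      exact Finset.sum_congr rfl fun i _ => by
        by_cases h : y ∈ A i <;> simp [Set.indicator_apply, h]
    rw [this]
    exact (Nat.cast_le (α := ℝ≥0∞)).2 (hN y)
  · rw [Set.indicator_of_notMem hy]
    refine le_of_eq (Finset.sum_eq_zero fun i hi => ?_)
    have hyi : y ∉ A i := fun h => hy (Set.mem_biUnion hi h)
    exact Set.indicator_of_notMem hyi _

end BSQ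

namespace BSQ2

lemma finSegUnion_empty : FinSegUnion (∅ : Set E2) :=
  ⟨0, Fin.elim0, Fin.elim0, by simp⟩

lemma finSegUnion_seg (a b : E2) : FinSegUnion (segment ℝ a b) :=
  ⟨1, fun _ => a, fun _ => b, (Set.iUnion_const _).symm⟩

lemma finSegUnion_union {s t : Set E2} (hs : FinSegUnion s) (ht : FinSegUnion t) :
    FinSegUnion (s ∪ t) := by
  obtain ⟨n, a, b, rfl⟩ := hs
  obtain ⟨m, a', b', rfl⟩ := ht
  refine ⟨n + m, Fin.append a a', Fin.append b b', ?_⟩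
  rw [← (finSumFinEquiv (m := n) (n := m)).surjective.iUnion_comp
    (g := fun i => segment ℝ (Fin.append a a' i) (Fin.append b b' i)), Set.iUnion_sum]
  congr 1
  · exact Set.iUnion_congr fun i => by
      rw [finSumFinEquiv_apply_left, Fin.append_left, Fin.append_left]
  · exact Set.iUnion_congr fun i => by
      rw [finSumFinEquiv_apply_right, Fin.append_right, Fin.append_right]

lemma finSegUnion_bdry (c : Fin 2 → ℝ) (r : ℝ) : FinSegUnion (BSQ.bdry c r) :=
  finSegUnion_union (finSegUnion_union (finSegUnion_union
    (finSegUnion_seg _ _) (finSegUnion_seg _ _)) (finSegUnion_seg _ _)) (finSegUnion_seg _ _)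

lemma finSegUnion_biUnion {ι : Type*} (F : Finset ι) (f : ι → Set E2)
    (h : ∀ i ∈ F, FinSegUnion (f i)) : FinSegUnion (⋃ i ∈ F, f i) := by
  classical
  induction F using Finset.induction_on with
  | empty => simpa using finSegUnion_empty
  | insert _ _ hx ih =>

    rw [Finset.set_biUnion_insert]
    exact finSegUnion_union (h _ (Finset.mem_insert_self _ _))
      (ih fun i hi => h i (Finset.mem_insert_of_mem hi))

end BSQ2


set_option maxHeartbeats 1000000 in
/-- **Boundary length of unions of bad squares** (Lemma 4.3 / "cup"). -/
theorem boundary_length_bad_square_unions :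
    ∃ c θ₀ : ℝ, 0 < c ∧ 0 < θ₀ ∧
    ∀ (n₀ : ℕ) (θ : ℝ), θ = (1 / 2 : ℝ) ^ n₀ → θ ≤ θ₀ →
    ∀ μ : ℝ, 0 < μ →
    ∀ Jst : Set E2, MeasurableSet Jst → μH[1] Jst < ⊤ →
    ∀ i₁ i₂ : ℕ, 8 ≤ i₁ → i₁ ≤ i₂ →
    ∀ ℛ : Set DSq, (∀ Q ∈ ℛ, i₁ ≤ Q.idx ∧ Q.idx ≤ i₂ ∧ Q ∈ badSq θ μ Jst Q.idx) →
    ∀ R : Set E2, R = ⋃ Q ∈ ℛ, closure (Q.enl θ μ 5) →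
      μH[1] (frontier R) ≤ ENNReal.ofReal (c / θ ^ 3) * μH[1] (Jst ∩ R) ∧
      ∃ ΓR : Set E2, frontier R ⊆ ΓR ∧ FinSegUnion ΓR ∧
        μH[1] ΓR ≤ ENNReal.ofReal (c / θ ^ 3) * μH[1] (Jst ∩ R) ∧
        ∀ x ∈ R, IsConnected (ΓR ∩ connectedComponentIn R x) := by
  
  classical
  refine ⟨160, 1/2, by norm_num, by norm_num, ?_⟩
  intro n₀ θ hθeq hθle μ hμ Jst hJm hJfin i₁ i₂ hi₁ hi₁₂ ℛ hℛ R hR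
  have hθpos : 0 < θ := hθeq ▸ pow_pos (by norm_num) n₀
  have hθ1 : θ ≤ 1 := le_trans hθle (by norm_num)
  have hθ3 : (0:ℝ) < θ ^ 3 := pow_pos hθpos 3
  -- scales and boxes
  have hspos : ∀ Q : DSq, 0 < Q.sc θ μ := fun Q => mul_pos hμ (pow_pos hθpos _)
  have h5pos : ∀ Q : DSq, 0 < 5 * Q.sc θ μ := fun Q => by have := hspos Q; linarith
  set bx : DSq → Set E2 := fun Q => BSQ.box (Q.ctr θ μ) (5 * Q.sc θ μ) with hbx
  set bd : DSq → Set E2 := fun Q => BSQ.bdry (Q.ctr θ μ) (5 * Q.sc θ μ) with hbd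
  have henl : ∀ (lam : ℝ) (Q : DSq), Q.enl θ μ lam = BSQ.obox (Q.ctr θ μ) (lam * Q.sc θ μ) :=
    fun _ _ => rfl
  have hclos : ∀ Q : DSq, closure (Q.enl θ μ 5) = bx Q := by
    intro Q; rw [henl, hbx, BSQ.closure_obox (h5pos Q)]
  have henl_sub_bx : ∀ Q : DSq, Q.enl θ μ (3/2) ⊆ bx Q := by
    intro Q y hy j
    have := hy j
    have hs := hspos Q
    refine le_trans (le_of_lt this) (by nlinarith)
  have henl5_sub_bx : ∀ Q : DSq, Q.enl θ μ 5 ⊆ bx Q := by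
    intro Q
    rw [henl, hbx]
    exact BSQ.obox_subset_box
  have hRbox : R = ⋃ Q ∈ ℛ, bx Q := by
    rw [hR]; exact Set.iUnion₂_congr fun Q hQ => hclos Q
  -- the family of essential squares
  set 𝒩 : Set DSq := {Q | Q ∈ ℛ ∧ ∃ x ∈ bx Q, ∀ P ∈ ℛ, P.idx < Q.idx → x ∉ bx P} with h𝒩
  have h𝒩sub : 𝒩 ⊆ ℛ := fun Q hQ => hQ.1
  -- R is the union of essential boxes
  have hRN : R = ⋃ Q ∈ 𝒩, bx Q := by
    rw [hRbox]
    apply Set.Subset.antisymm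
    · intro y hy
      rw [Set.mem_iUnion₂] at hy
      obtain ⟨Q, hQ, hyQ⟩ := hy
      have key : ∀ n (Q : DSq), Q ∈ ℛ → Q.idx ≤ n → ∀ y, y ∈ bx Q → y ∈ ⋃ Q ∈ 𝒩, bx Q := by
        intro n
        induction n with
        | zero =>
          intro Q hQ hidx y hy
          exact Set.mem_biUnion ⟨hQ, y, hy, fun P hP hPlt => absurd hPlt (by omega)⟩ hy
        | succ n ih =>
          intro Q hQ hidx y hy
          by_cases hQN : Q ∈ 𝒩
          · exact Set.mem_biUnion hQN hy
          · have hne : ∃ P ∈ ℛ, P.idx < Q.idx ∧ y ∈ bx P := by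
              rw [h𝒩, Set.mem_setOf_eq] at hQN
              push_neg at hQN
              obtain ⟨P, hP, hlt, hyP⟩ := hQN hQ y hy
              exact ⟨P, hP, hlt, hyP⟩
            obtain ⟨P, hP, hlt, hyP⟩ := hne
            exact ih P hP (by omega) y hyP
      exact key Q.idx Q hQ le_rfl y hyQ
    · exact Set.iUnion₂_mono' fun Q hQ => ⟨Q, h𝒩sub hQ, subset_rfl⟩
  -- badness bound
  have hbad : ∀ Q ∈ ℛ, ENNReal.ofReal (θ ^ 3 * (μ * θ ^ Q.idx)) ≤
      μH[1] (Jst ∩ Q.enl θ μ (3/2)) := by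
    intro Q hQ
    exact ((hℛ Q hQ).2.2).2
  -- cross-scale exclusion
  have hcross : ∀ P ∈ 𝒩, ∀ Q ∈ 𝒩, P.idx < Q.idx →
      ∀ y : E2, y ∈ P.enl θ μ (3/2) → y ∈ Q.enl θ μ (3/2) → False := by
    intro P hP Q hQ hlt y hyP hyQ
    have hsP := hspos P
    have hsQ := hspos Q
    have hQP : bx Q ⊆ bx P := by
      intro z hz j
      have h1 : |z j - Q.ctr θ μ j| ≤ 5 * Q.sc θ μ := hz j
      have h2 : |y j - Q.ctr θ μ j| < 3/2 * Q.sc θ μ := hyQ j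
      have h3 : |y j - P.ctr θ μ j| < 3/2 * P.sc θ μ := hyP j
      have hscale : Q.sc θ μ ≤ θ * P.sc θ μ := by
        show μ * θ ^ Q.idx ≤ θ * (μ * θ ^ P.idx)
        have : θ ^ Q.idx ≤ θ ^ (P.idx + 1) :=
          pow_le_pow_of_le_one hθpos.le hθ1 (by omega)
        rw [pow_succ] at this
        calc μ * θ ^ Q.idx ≤ μ * (θ ^ P.idx * θ) := by
              exact mul_le_mul_of_nonneg_left this hμ.le
          _ = θ * (μ * θ ^ P.idx) := by ring
      have htri : |z j - P.ctr θ μ j| ≤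
          |z j - Q.ctr θ μ j| + |y j - Q.ctr θ μ j| + |y j - P.ctr θ μ j| := by
        calc |z j - P.ctr θ μ j|
            ≤ |z j - Q.ctr θ μ j| + |Q.ctr θ μ j - P.ctr θ μ j| := abs_sub_le _ _ _
          _ ≤ |z j - Q.ctr θ μ j| + (|Q.ctr θ μ j - y j| + |y j - P.ctr θ μ j|) := by
              have := abs_sub_le (Q.ctr θ μ j) (y j) (P.ctr θ μ j)
              linarith
          _ = |z j - Q.ctr θ μ j| + |y j - Q.ctr θ μ j| + |y j - P.ctr θ μ j| := by
              rw [abs_sub_comm (Q.ctr θ μ j) (y j)]; ring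
      have hθhalf : θ ≤ 1/2 := hθle
      nlinarith [hsP, hsQ]
    obtain ⟨x, hxQ, hxav⟩ := hQ.2
    exact hxav P (h𝒩sub hP) hlt (hQP hxQ)
  -- same-scale position pinning and multiplicity 4
  have hext : ∀ A B : DSq, A.idx = B.idx → A.pos = B.pos → A = B := by
    intro A B h1 h2; cases A; cases B; simp_all
  have hmult : ∀ (G : Finset DSq), (↑G ⊆ 𝒩) → ∀ y : E2,
      (G.filter (fun Q => y ∈ Jst ∩ Q.enl θ μ (3/2))).card ≤ 4 := by
    intro G hG y
    set F := G.filter (fun Q => y ∈ Jst ∩ Q.enl θ μ (3/2)) with hF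
    rcases Finset.eq_empty_or_nonempty F with hFe | ⟨Q₀, hQ₀⟩
    · rw [hFe]; simp
    have hmem : ∀ Q ∈ F, Q ∈ 𝒩 ∧ y ∈ Q.enl θ μ (3/2) := by
      intro Q hQ
      rw [hF, Finset.mem_filter] at hQ
      exact ⟨hG hQ.1, hQ.2.2⟩
    have hidx : ∀ Q ∈ F, Q.idx = Q₀.idx := by
      intro Q hQ
      by_contra hne
      rcases Nat.lt_or_ge Q.idx Q₀.idx with h | h
      · exact hcross Q (hmem Q hQ).1 Q₀ (hmem Q₀ hQ₀).1 h y (hmem Q hQ).2 (hmem Q₀ hQ₀).2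
      · exact hcross Q₀ (hmem Q₀ hQ₀).1 Q (hmem Q hQ).1 (by omega) y
          (hmem Q₀ hQ₀).2 (hmem Q hQ).2
    set s0 : ℝ := μ * θ ^ Q₀.idx with hs0
    have hs0pos : 0 < s0 := mul_pos hμ (pow_pos hθpos _)
    set m : Fin 2 → ℤ := fun j => ⌊(y j / s0 - 1) / 2 + 3/4⌋ with hm
    have hpin : ∀ Q ∈ F, ∀ j : Fin 2, Q.pos j = m j - 1 ∨ Q.pos j = m j := by
      intro Q hQ j
      have h2 : |y j - Q.ctr θ μ j| < 3/2 * Q.sc θ μ := (hmem Q hQ).2 j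
      have hQidx : Q.idx = Q₀.idx := hidx Q hQ
      have hsc : Q.sc θ μ = s0 := by rw [DSq.sc, hQidx, hs0]
      have hctr : Q.ctr θ μ j = s0 + 2 * s0 * (Q.pos j : ℝ) := by
        rw [DSq.ctr, hsc]
      rw [hsc, hctr] at h2
      rw [abs_lt] at h2
      set t : ℝ := (y j / s0 - 1) / 2 with ht
      have ht' : 2 * s0 * t = y j - s0 := by
        rw [ht]; field_simp
      have h2s0 : (0:ℝ) < 2 * s0 := by linarith
      have hp1 : (Q.pos j : ℝ) < t + 3/4 := by
        refine (mul_lt_mul_iff_right₀ h2s0).1 ?_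
        have : 2 * s0 * (t + 3/4) = (y j - s0) + 3/2 * s0 := by rw [mul_add, ht']; ring
        rw [this]
        linarith [h2.1]
      have hp2 : t - 3/4 < (Q.pos j : ℝ) := by
        refine (mul_lt_mul_iff_right₀ h2s0).1 ?_
        have : 2 * s0 * (t - 3/4) = (y j - s0) - 3/2 * s0 := by rw [mul_sub, ht']; ring
        rw [this]
        linarith [h2.2]
      have hle : Q.pos j ≤ m j := by
        rw [hm]
        exact Int.le_floor.2 (by push_cast; linarith)
      have hge : m j - 1 ≤ Q.pos j := by
        have hmf : (m j : ℝ) ≤ t + 3/4 := by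
          rw [hm, ht]; exact Int.floor_le _
        have : (m j : ℝ) - 2 < (Q.pos j : ℝ) := by linarith
        have h' : m j - 2 < Q.pos j := by exact_mod_cast this
        omega
      omega
    -- inject into a 4-element set
    have hcard : F.card ≤ (({m 0 - 1, m 0} : Finset ℤ) ×ˢ ({m 1 - 1, m 1} : Finset ℤ)).card := by
      refine Finset.card_le_card_of_injOn (fun Q => (Q.pos 0, Q.pos 1)) ?_ ?_
      · intro Q hQ
        rw [Finset.mem_coe, Finset.mem_product]
        constructor
        · rcases hpin Q hQ 0 with h | h <;> simp [h]
        · rcases hpin Q hQ 1 with h | h <;> simp [h]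
      · intro Q hQ P hP hQP
        have h0 : Q.pos 0 = P.pos 0 := congrArg Prod.fst hQP
        have h1 : Q.pos 1 = P.pos 1 := congrArg Prod.snd hQP
        refine hext Q P (by rw [hidx Q hQ, hidx P hP]) (funext fun j => ?_)
        fin_cases j
        · exact h0
        · exact h1
    refine le_trans hcard ?_
    rw [Finset.card_product]
    calc ({m 0 - 1, m 0} : Finset ℤ).card * ({m 1 - 1, m 1} : Finset ℤ).card
        ≤ 2 * 2 := Nat.mul_le_mul (Finset.card_insert_le _ _) (Finset.card_insert_le _ _)
      _ = 4 := rfl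
  -- measurability of the enlarged squares
  have hmeas : ∀ Q : DSq, MeasurableSet (Jst ∩ Q.enl θ μ (3/2)) := by
    intro Q
    refine hJm.inter ?_
    rw [henl]
    exact BSQ.isOpen_obox.measurableSet
  -- 𝒩 is finite
  have hfin : 𝒩.Finite := by
    by_contra hinf
    have hinf' : 𝒩.Infinite := hinf
    set ε := ENNReal.ofReal (θ ^ 3 * (μ * θ ^ i₂)) with hε
    have hε0 : ε ≠ 0 := by
      rw [hε]
      simp only [ne_eq, ENNReal.ofReal_eq_zero, not_le]
      positivity
    have hεtop : ε ≠ ⊤ := ENNReal.ofReal_ne_top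
    have hJtop : 4 * μH[1] Jst ≠ ⊤ := by
      refine ENNReal.mul_ne_top (by norm_num) hJfin.ne
    obtain ⟨n, hn⟩ := ENNReal.exists_nat_gt (ENNReal.div_lt_top hJtop hε0).ne
    obtain ⟨G, hGsub, hGcard⟩ := hinf'.exists_subset_card_eq n
    have hstep : (n : ℝ≥0∞) * ε ≤ 4 * μH[1] Jst := by
      have h1 : ∀ Q ∈ G, ε ≤ μH[1] (Jst ∩ Q.enl θ μ (3/2)) := by
        intro Q hQ
        have hQℛ : Q ∈ ℛ := h𝒩sub (hGsub hQ)
        refine le_trans ?_ (hbad Q hQℛ)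
        rw [hε]
        refine ENNReal.ofReal_le_ofReal ?_
        have h2 : θ ^ i₂ ≤ θ ^ Q.idx := pow_le_pow_of_le_one hθpos.le hθ1 (hℛ Q hQℛ).2.1
        exact mul_le_mul_of_nonneg_left (mul_le_mul_of_nonneg_left h2 hμ.le) hθ3.le
      calc (n : ℝ≥0∞) * ε = ∑ _Q ∈ G, ε := by
            rw [Finset.sum_const, hGcard, nsmul_eq_mul]
        _ ≤ ∑ Q ∈ G, μH[1] (Jst ∩ Q.enl θ μ (3/2)) := Finset.sum_le_sum h1
        _ ≤ (4 : ℕ) * μH[1] (⋃ Q ∈ G, Jst ∩ Q.enl θ μ (3/2)) :=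
            BSQ.sum_measure_le_card_mul _ G _ (fun Q _ => hmeas Q) 4 (hmult G hGsub)
        _ ≤ 4 * μH[1] Jst := by
            rw [show ((4:ℕ) : ℝ≥0∞) = (4 : ℝ≥0∞) by norm_num]
            refine mul_le_mul_right (measure_mono ?_) _
            exact Set.iUnion₂_subset fun Q _ => Set.inter_subset_left
    rw [ENNReal.div_lt_iff (Or.inl hε0) (Or.inl hεtop)] at hn
    exact absurd hstep (not_le.2 hn)
  set N : Finset DSq := hfin.toFinset with hN
  have hNmem : ∀ Q, Q ∈ N ↔ Q ∈ 𝒩 := fun Q => Set.Finite.mem_toFinset hfin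
  have hRN' : R = ⋃ Q ∈ N, bx Q := by
    rw [hRN]; ext z; simp only [Set.mem_iUnion₂]
    constructor
    · rintro ⟨Q, hQ, hz⟩; exact ⟨Q, (hNmem Q).2 hQ, hz⟩
    · rintro ⟨Q, hQ, hz⟩; exact ⟨Q, (hNmem Q).1 hQ, hz⟩
  have hclosedR : IsClosed R := by
    rw [hRN]
    exact hfin.isClosed_biUnion fun Q _ => BSQ.isClosed_box
  -- the candidate Γ
  set ΓR : Set E2 := ⋃ Q ∈ N, bd Q with hΓ
  have hfront : frontier R ⊆ ΓR := by
    intro z hz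
    have hz1 : z ∈ R := by
      have := frontier_subset_closure (s := R) hz
      rwa [hclosedR.closure_eq] at this
    have hz2 : z ∉ interior R := fun h => hz.2 h
    rw [hRN'] at hz1
    rw [Set.mem_iUnion₂] at hz1
    obtain ⟨Q, hQN, hzQ⟩ := hz1
    have hno : z ∉ Q.enl θ μ 5 := by
      intro hzin
      refine hz2 (interior_maximal ?_ ?_ hzin)
      · refine le_trans (henl5_sub_bx Q) ?_
        rw [hRN']
        exact Set.subset_biUnion_of_mem hQN
      · rw [henl]; exact BSQ.isOpen_obox
    have hzbd : z ∈ bd Q := by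
      show z ∈ BSQ.bdry (Q.ctr θ μ) (5 * Q.sc θ μ)
      rw [BSQ.bdry_eq (h5pos Q)]
      exact ⟨hzQ, fun h => hno h⟩
    exact Set.mem_biUnion hQN hzbd
  -- the measure bound
  have hsum : ∑ Q ∈ N, μH[1] (Jst ∩ Q.enl θ μ (3/2)) ≤ 4 * μH[1] (Jst ∩ R) := by
    calc ∑ Q ∈ N, μH[1] (Jst ∩ Q.enl θ μ (3/2))
        ≤ (4 : ℕ) * μH[1] (⋃ Q ∈ N, Jst ∩ Q.enl θ μ (3/2)) :=
          BSQ.sum_measure_le_card_mul _ N _ (fun Q _ => hmeas Q) 4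
            (hmult N (fun Q hQ => (hNmem Q).1 hQ))
      _ ≤ 4 * μH[1] (Jst ∩ R) := by
          rw [show ((4:ℕ) : ℝ≥0∞) = (4 : ℝ≥0∞) by norm_num]
          refine mul_le_mul_right (measure_mono ?_) _
          refine Set.iUnion₂_subset fun Q hQ => ?_
          refine Set.inter_subset_inter_right _ ?_
          refine le_trans (henl_sub_bx Q) ?_
          rw [hRN']
          exact Set.subset_biUnion_of_mem hQ
  have hmb : μH[1] ΓR ≤ ENNReal.ofReal (160 / θ ^ 3) * μH[1] (Jst ∩ R) := by
    calc μH[1] ΓR ≤ ∑ Q ∈ N, μH[1] (bd Q) := measure_biUnion_finset_le _ _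
      _ ≤ ∑ Q ∈ N, ENNReal.ofReal (40 / θ ^ 3) * μH[1] (Jst ∩ Q.enl θ μ (3/2)) := by
          refine Finset.sum_le_sum fun Q hQ => ?_
          have h1 : μH[1] (bd Q) ≤ ENNReal.ofReal (8 * (5 * Q.sc θ μ)) :=
            BSQ.measure_bdry_le (h5pos Q)
          refine le_trans h1 ?_
          have heq : 8 * (5 * Q.sc θ μ) = (40 / θ ^ 3) * (θ ^ 3 * (μ * θ ^ Q.idx)) := by
            rw [DSq.sc]
            field_simp
            ring
          rw [heq, ENNReal.ofReal_mul (by positivity)]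
          exact mul_le_mul_right (hbad Q (h𝒩sub ((hNmem Q).1 hQ))) _
      _ = ENNReal.ofReal (40 / θ ^ 3) * ∑ Q ∈ N, μH[1] (Jst ∩ Q.enl θ μ (3/2)) := by
          rw [Finset.mul_sum]
      _ ≤ ENNReal.ofReal (40 / θ ^ 3) * (4 * μH[1] (Jst ∩ R)) := mul_le_mul_right hsum _
      _ = ENNReal.ofReal (160 / θ ^ 3) * μH[1] (Jst ∩ R) := by
          rw [← mul_assoc]
          congr 1
          rw [show (4 : ℝ≥0∞) = ENNReal.ofReal 4 by norm_num, mul_comm,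
            ← ENNReal.ofReal_mul (by norm_num)]
          congr 1
          ring
  refine ⟨le_trans (measure_mono hfront) hmb, ΓR, hfront, ?_, hmb, ?_⟩
  · exact BSQ2.finSegUnion_biUnion N _ fun Q _ => BSQ2.finSegUnion_bdry _ _
  -- connectivity
  intro x hxR
  set K := connectedComponentIn R x with hK
  have hKsub : K ⊆ R := connectedComponentIn_subset _ _
  have hbx_sub_R : ∀ Q ∈ 𝒩, bx Q ⊆ R := by
    intro Q hQ
    rw [hRN]
    exact Set.subset_biUnion_of_mem hQ
  have hdich : ∀ Q ∈ 𝒩, (bx Q ∩ K).Nonempty → bx Q ⊆ K := by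
    rintro Q hQ ⟨z, hz1, hz2⟩
    have h1 : bx Q ⊆ connectedComponentIn R z :=
      BSQ.convex_box.isPreconnected.subset_connectedComponentIn hz1 (hbx_sub_R Q hQ)
    rwa [← connectedComponentIn_eq (F := R) (x := x) hz2] at h1
  set NK : Finset DSq := N.filter (fun Q => bx Q ⊆ K) with hNK
  have hNK𝒩 : ∀ Q ∈ NK, Q ∈ 𝒩 := by
    intro Q hQ
    rw [hNK, Finset.mem_filter] at hQ
    exact (hNmem Q).1 hQ.1
  have hNKsub : ∀ Q ∈ NK, bx Q ⊆ K := by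
    intro Q hQ
    rw [hNK, Finset.mem_filter] at hQ
    exact hQ.2
  have hKU : K = ⋃ Q ∈ NK, bx Q := by
    apply Set.Subset.antisymm
    · intro y hy
      have hyR := hKsub hy
      rw [hRN, Set.mem_iUnion₂] at hyR
      obtain ⟨Q, hQ, hyQ⟩ := hyR
      have hQK : bx Q ⊆ K := hdich Q hQ ⟨y, hyQ, hy⟩
      exact Set.mem_biUnion (Finset.mem_filter.2 ⟨(hNmem Q).2 hQ, hQK⟩) hyQ
    · exact Set.iUnion₂_subset fun Q hQ => hNKsub Q hQ
  have hΓK : ΓR ∩ K = ⋃ Q ∈ NK, bd Q := by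
    apply Set.Subset.antisymm
    · rintro y ⟨hyΓ, hyK⟩
      rw [hΓ, Set.mem_iUnion₂] at hyΓ
      obtain ⟨Q, hQN, hybd⟩ := hyΓ
      have hybx : y ∈ bx Q := BSQ.bdry_subset_box (h5pos Q) hybd
      have hQK : bx Q ⊆ K := hdich Q ((hNmem Q).1 hQN) ⟨y, hybx, hyK⟩
      exact Set.mem_biUnion (Finset.mem_filter.2 ⟨hQN, hQK⟩) hybd
    · intro y hy
      rw [Set.mem_iUnion₂] at hy
      obtain ⟨Q, hQ, hybd⟩ := hy
      rw [hNK, Finset.mem_filter] at hQ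
      exact ⟨Set.mem_biUnion hQ.1 hybd, hQ.2 (BSQ.bdry_subset_box (h5pos Q) hybd)⟩
  -- NK is nonempty
  have hxK : x ∈ K := mem_connectedComponentIn hxR
  have hQ₀ : ∃ Q₀, Q₀ ∈ NK := by
    have hxR' := hxR
    rw [hRN, Set.mem_iUnion₂] at hxR'
    obtain ⟨Q₀, hQ₀, hxQ₀⟩ := hxR'
    exact ⟨Q₀, Finset.mem_filter.2 ⟨(hNmem Q₀).2 hQ₀, hdich Q₀ hQ₀ ⟨x, hxQ₀, hxK⟩⟩⟩
  obtain ⟨Q₀, hQ₀NK⟩ := hQ₀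
  -- noncontainment lemmas
  have hcont : ∀ A B : DSq, bx A ⊆ bx B → ∀ j : Fin 2,
      |A.ctr θ μ j - B.ctr θ μ j| + 5 * A.sc θ μ ≤ 5 * B.sc θ μ := by
    intro A B hsub j
    have hsA := hspos A
    fin_cases j
    · show |A.ctr θ μ 0 - B.ctr θ μ 0| + 5 * A.sc θ μ ≤ 5 * B.sc θ μ
      have hu : BSQ.pt (A.ctr θ μ 0 + 5 * A.sc θ μ) (A.ctr θ μ 1) ∈ bx A := by
        refine BSQ.mem_box_iff.2 ⟨?_, ?_⟩
        · rw [BSQ.pt_zero, show A.ctr θ μ 0 + 5 * A.sc θ μ - A.ctr θ μ 0 = 5 * A.sc θ μ by ring,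
            abs_of_nonneg (by linarith)]
        · rw [BSQ.pt_one, sub_self, abs_zero]; linarith
      have hv : BSQ.pt (A.ctr θ μ 0 - 5 * A.sc θ μ) (A.ctr θ μ 1) ∈ bx A := by
        refine BSQ.mem_box_iff.2 ⟨?_, ?_⟩
        · rw [BSQ.pt_zero, show A.ctr θ μ 0 - 5 * A.sc θ μ - A.ctr θ μ 0 = -(5 * A.sc θ μ) by ring,
            abs_neg, abs_of_nonneg (by linarith)]
        · rw [BSQ.pt_one, sub_self, abs_zero]; linarith
      have hu' := (BSQ.mem_box_iff.1 (hsub hu)).1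
      have hv' := (BSQ.mem_box_iff.1 (hsub hv)).1
      rw [BSQ.pt_zero] at hu' hv'
      rw [abs_le] at hu' hv'
      have habs : |A.ctr θ μ 0 - B.ctr θ μ 0| ≤ 5 * B.sc θ μ - 5 * A.sc θ μ :=
        abs_le.2 ⟨by linarith [hv'.1], by linarith [hu'.2]⟩
      linarith
    · show |A.ctr θ μ 1 - B.ctr θ μ 1| + 5 * A.sc θ μ ≤ 5 * B.sc θ μ
      have hu : BSQ.pt (A.ctr θ μ 0) (A.ctr θ μ 1 + 5 * A.sc θ μ) ∈ bx A := by
        refine BSQ.mem_box_iff.2 ⟨?_, ?_⟩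
        · rw [BSQ.pt_zero, sub_self, abs_zero]; linarith
        · rw [BSQ.pt_one, show A.ctr θ μ 1 + 5 * A.sc θ μ - A.ctr θ μ 1 = 5 * A.sc θ μ by ring,
            abs_of_nonneg (by linarith)]
      have hv : BSQ.pt (A.ctr θ μ 0) (A.ctr θ μ 1 - 5 * A.sc θ μ) ∈ bx A := by
        refine BSQ.mem_box_iff.2 ⟨?_, ?_⟩
        · rw [BSQ.pt_zero, sub_self, abs_zero]; linarith
        · rw [BSQ.pt_one, show A.ctr θ μ 1 - 5 * A.sc θ μ - A.ctr θ μ 1 = -(5 * A.sc θ μ) by ring,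
            abs_neg, abs_of_nonneg (by linarith)]
      have hu' := (BSQ.mem_box_iff.1 (hsub hu)).2
      have hv' := (BSQ.mem_box_iff.1 (hsub hv)).2
      rw [BSQ.pt_one] at hu' hv'
      rw [abs_le] at hu' hv'
      have habs : |A.ctr θ μ 1 - B.ctr θ μ 1| ≤ 5 * B.sc θ μ - 5 * A.sc θ μ :=
        abs_le.2 ⟨by linarith [hv'.1], by linarith [hu'.2]⟩
      linarith
  have hctr_eq_of : ∀ A B : DSq, A.idx = B.idx → bx A ⊆ bx B → A = B := by
    intro A B hidx hsub
    have hscAB : A.sc θ μ = B.sc θ μ := by rw [DSq.sc, DSq.sc, hidx]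
    have hc : ∀ j, A.ctr θ μ j = B.ctr θ μ j := by
      intro j
      have h1 := hcont A B hsub j
      rw [hscAB] at h1
      have h0 : |A.ctr θ μ j - B.ctr θ μ j| = 0 :=
        le_antisymm (by linarith) (abs_nonneg _)
      rw [abs_eq_zero, sub_eq_zero] at h0
      exact h0
    have hpos : A.pos = B.pos := by
      refine funext fun j => ?_
      have hc' := hc j
      rw [DSq.ctr, DSq.ctr, hscAB] at hc'
      have hsB := hspos B
      have h2 : (2 : ℝ) * B.sc θ μ ≠ 0 := by positivity
      have h3 : (2 : ℝ) * B.sc θ μ * (A.pos j : ℝ) = 2 * B.sc θ μ * (B.pos j : ℝ) := by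
        linarith
      have h4 : (A.pos j : ℝ) = (B.pos j : ℝ) := mul_left_cancel₀ h2 h3
      exact_mod_cast h4
    exact hext A B hidx hpos
  have hsize : ∀ A B : DSq, A.idx < B.idx → ¬ (bx A ⊆ bx B) := by
    intro A B hlt hsub
    have h1 := hcont A B hsub 0
    have habs := abs_nonneg (A.ctr θ μ 0 - B.ctr θ μ 0)
    have hBA : B.sc θ μ < A.sc θ μ := by
      show μ * θ ^ B.idx < μ * θ ^ A.idx
      exact mul_lt_mul_of_pos_left
        (pow_lt_pow_right_of_lt_one₀ hθpos (lt_of_le_of_lt hθle (by norm_num)) hlt) hμ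
    linarith
  have hadjle : ∀ A ∈ 𝒩, ∀ B ∈ 𝒩, A.idx ≤ B.idx → (bx A ∩ bx B).Nonempty →
      (bd A ∩ bd B).Nonempty := by
    intro A hA B hB hle hint
    by_cases heq : A = B
    · subst heq
      obtain ⟨w, hw⟩ := BSQ.bdry_nonempty (c := A.ctr θ μ) (r := 5 * A.sc θ μ)
      exact ⟨w, hw, hw⟩
    · rcases Nat.lt_or_ge A.idx B.idx with hlt | hge
      · have hAB : ¬ bx A ⊆ bx B := hsize A B hlt
        have hBA : ∃ z ∈ bx B, z ∉ bx A := by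
          obtain ⟨z, hz, hzav⟩ := hB.2
          exact ⟨z, hz, hzav A (h𝒩sub hA) hlt⟩
        exact BSQ.bdry_inter_bdry (h5pos A) (h5pos B) hint hAB hBA
      · have hidx : A.idx = B.idx := by omega
        have hAB : ¬ bx A ⊆ bx B := fun h => heq (hctr_eq_of A B hidx h)
        have hBA : ∃ z ∈ bx B, z ∉ bx A := by
          have : ¬ bx B ⊆ bx A := fun h => heq (hctr_eq_of B A hidx.symm h).symm
          exact Set.not_subset.1 this
        exact BSQ.bdry_inter_bdry (h5pos A) (h5pos B) hint hAB hBA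
  have hadj : ∀ A ∈ 𝒩, ∀ B ∈ 𝒩, (bx A ∩ bx B).Nonempty → (bd A ∩ bd B).Nonempty := by
    intro A hA B hB hint
    rcases le_total A.idx B.idx with h | h
    · exact hadjle A hA B hB h hint
    · obtain ⟨z, hz1, hz2⟩ := hadjle B hB A hA h (by
        obtain ⟨w, hw1, hw2⟩ := hint; exact ⟨w, hw2, hw1⟩)
      exact ⟨z, hz2, hz1⟩
  -- graph connectivity within the component
  have hchain : ∀ A ∈ NK, ∀ B ∈ NK, Relation.ReflTransGen
      (fun P Q : DSq => (bd P ∩ bd Q).Nonempty ∧ P ∈ (↑NK : Set DSq)) A B := by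
    intro A hA
    set r : DSq → DSq → Prop :=
      fun P Q => (bd P ∩ bd Q).Nonempty ∧ P ∈ (↑NK : Set DSq) with hr
    by_contra hno
    push_neg at hno
    obtain ⟨B0, hB0, hB0n⟩ := hno
    set SR : Finset DSq := NK.filter (fun B => Relation.ReflTransGen r A B) with hSR
    have hSRsub : ∀ Q ∈ SR, Q ∈ NK := fun Q hQ => (Finset.mem_filter.1 hQ).1
    set U : Set E2 := ⋃ Q ∈ SR, bx Q with hU
    set V : Set E2 := ⋃ Q ∈ (NK \ SR), bx Q with hV
    have hUclosed : IsClosed U := isClosed_biUnion_finset fun Q _ => BSQ.isClosed_box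
    have hVclosed : IsClosed V := isClosed_biUnion_finset fun Q _ => BSQ.isClosed_box
    have hcover : K ⊆ U ∪ V := by
      intro y hy
      rw [hKU, Set.mem_iUnion₂] at hy
      obtain ⟨Q, hQ, hyQ⟩ := hy
      by_cases hQS : Q ∈ SR
      · exact Or.inl (Set.mem_biUnion hQS hyQ)
      · exact Or.inr (Set.mem_biUnion (Finset.mem_sdiff.2 ⟨hQ, hQS⟩) hyQ)
    have hctrA : BSQ.pt (A.ctr θ μ 0) (A.ctr θ μ 1) ∈ bx A :=
      BSQ.center_mem_box (h5pos A).le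
    have hASR : A ∈ SR := Finset.mem_filter.2 ⟨hA, Relation.ReflTransGen.refl⟩
    have hKUne : (K ∩ U).Nonempty :=
      ⟨BSQ.pt (A.ctr θ μ 0) (A.ctr θ μ 1), hNKsub A hA hctrA, Set.mem_biUnion hASR hctrA⟩
    have hB0SR : B0 ∉ SR := fun h => hB0n (Finset.mem_filter.1 h).2
    have hctrB0 : BSQ.pt (B0.ctr θ μ 0) (B0.ctr θ μ 1) ∈ bx B0 :=
      BSQ.center_mem_box (h5pos B0).le
    have hKVne : (K ∩ V).Nonempty :=
      ⟨BSQ.pt (B0.ctr θ μ 0) (B0.ctr θ μ 1), hNKsub B0 hB0 hctrB0,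
        Set.mem_biUnion (Finset.mem_sdiff.2 ⟨hB0, hB0SR⟩) hctrB0⟩
    obtain ⟨z, hzK, hzU, hzV⟩ := isPreconnected_closed_iff.1
      (isPreconnected_connectedComponentIn (F := R) (x := x)) U V hUclosed hVclosed
      hcover hKUne hKVne
    rw [hU, Set.mem_iUnion₂] at hzU
    rw [hV, Set.mem_iUnion₂] at hzV
    obtain ⟨P, hPSR, hzP⟩ := hzU
    obtain ⟨Q, hQV, hzQ⟩ := hzV
    have hQNK : Q ∈ NK := (Finset.mem_sdiff.1 hQV).1
    have hedge : (bd P ∩ bd Q).Nonempty :=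
      hadj P (hNK𝒩 P (hSRsub P hPSR)) Q (hNK𝒩 Q hQNK) ⟨z, hzP, hzQ⟩
    have hRTG : Relation.ReflTransGen r A Q :=
      ((Finset.mem_filter.1 hPSR).2).tail ⟨hedge, Finset.mem_coe.2 (hSRsub P hPSR)⟩
    exact (Finset.mem_sdiff.1 hQV).2 (Finset.mem_filter.2 ⟨hQNK, hRTG⟩)
  -- conclude
  have hcoe : ⋃ Q ∈ NK, bd Q = ⋃ Q ∈ (↑NK : Set DSq), bd Q := by
    simp only [Finset.mem_coe]
  rw [hΓK, hcoe]
  refine IsConnected.biUnion_of_reflTransGen ⟨Q₀, Finset.mem_coe.2 hQ₀NK⟩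
    (fun Q _ => BSQ.isConnected_bdry (h5pos Q)) ?_
  intro P hP Q hQ
  exact hchain P (Finset.mem_coe.1 hP) Q (Finset.mem_coe.1 hQ)
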